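/- Let V be a 2-dimensional real vector space with a symmetric bilinear form ⟨·,·⟩ and a basis {e₁,e₂} satisfying ⟨e₁,e₁⟩ = ⟨e₂,e₂⟩ = 0 and ⟨e₁,e₂⟩ = 1 (a null frame). If h is a symmetric bilinear map from V×V to a vector space W with a symmetric bilinear form, such that h(e₁,e₂) = 0, h(e₁,e₁) = λ·f₂, h(e₂,e₂) = μ·f₁ where f₁,f₂ ∈ W satisfy ⟨f₁,f₁⟩ = ⟨f₂,f₂⟩ = 0, ⟨f₁,f₂⟩ = 1, then for every v ∈ V, ⟨h(v,v),h(v,v)⟩ = (λμ/2)·⟨v,v⟩². -/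

import Mathlib

/-- Minimal (h(e₁,e₂)=0) Lagrangian-type second fundamental form in a null frame
is pseudo-isotropic with λ̃ = λμ/2. -/
theorem stmt_0 (V W : Type*) [AddCommGroup V] [Module ℝ V]
    [AddCommGroup W] [Module ℝ W]
    (gV : V →ₗ[ℝ] V →ₗ[ℝ] ℝ) (gW : W →ₗ[ℝ] W →ₗ[ℝ] ℝ)
    (hgV : ∀ x y, gV x y = gV y x) (hgW : ∀ x y, gW x y = gW y x)
    (b : Module.Basis (Fin 2) ℝ V) (e₁ e₂ : V) (he₁ : e₁ = b 0) (he₂ : e₂ = b 1)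
    (h11 : gV e₁ e₁ = 0) (h22 : gV e₂ e₂ = 0) (h12 : gV e₁ e₂ = 1)
    (h : V →ₗ[ℝ] V →ₗ[ℝ] W) (hsymm : ∀ x y, h x y = h y x)
    (f₁ f₂ : W) (hf1 : gW f₁ f₁ = 0) (hf2 : gW f₂ f₂ = 0) (hf12 : gW f₁ f₂ = 1)
    (lam mu : ℝ)
    (hmin : h e₁ e₂ = 0) (hh11 : h e₁ e₁ = lam • f₂) (hh22 : h e₂ e₂ = mu • f₁) :
    ∀ v : V, gW (h v v) (h v v) = (lam * mu / 2) * (gV v v) ^ 2 := by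
  intro v
  set a := b.repr v 0 with ha
  set c := b.repr v 1 with hc
  have hv : v = a • e₁ + c • e₂ := by
    rw [he₁, he₂]
    have := b.sum_repr v
    rw [Fin.sum_univ_two] at this
    exact this.symm
  have h21 : gV e₂ e₁ = 1 := by rw [hgV]; exact h12
  have hmin' : h e₂ e₁ = 0 := by rw [hsymm]; exact hmin
  have hf21 : gW f₂ f₁ = 1 := by rw [hgW]; exact hf12
  rw [hv]
  simp only [map_add, map_smul, LinearMap.add_apply, LinearMap.smul_apply,
    hmin, hmin', hh11, hh22, h11, h22, h12, h21, smul_zero, add_zero, zero_add,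
    smul_smul, smul_eq_mul, smul_add, hf1, hf2, hf12, hf21, mul_zero, mul_one]
  ring
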